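/- Under the coordinate change z = Φ(x₁,x₂,x₃,x₄,y) = (x₁ − x₂², x₂, x₃ + x₄ y, x₄, (1+x₃)y), the vector field F(x,y,v) = (x₂ + 2x₂(x₃ + x₄ y), x₃ + x₄ y, ψ₁(x,y,v), (1+x₃)y, ψ₂(x,y,v)), where (ψ₁, ψ₂) is defined by the matrix equation [[1, x₄],[y, 1+x₃]]·(ψ₁, ψ₂)ᵀ = (v₁ − (1+x₃)y², v₂)ᵀ, is transformed into the linear vector field ż₁ = z₂, ż₂ = z₃, ż₃ = v₁, ż₄ = z₅, ż₅ = v₂. That is, DΦ(x,y)·F(x,y,v) = (z₂, z₃, v₁, z₅, v₂) with z = Φ(x,y), valid wherever 1 + x₃ − x₄ y ≠ 0. -/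

import Mathlib

theorem stmt_9 (Φ : (Fin 5 → ℝ) → (Fin 5 → ℝ))
    (hΦ : ∀ p : Fin 5 → ℝ,
      Φ p = ![p 0 - (p 1) ^ 2, p 1, p 2 + p 3 * p 4, p 3, (1 + p 2) * p 4])
    (p : Fin 5 → ℝ) (v : Fin 2 → ℝ)
    (hd : 1 + p 2 - p 3 * p 4 ≠ 0)
    (ψ₁ ψ₂ : ℝ)
    (hfeedback1 : ψ₁ + p 3 * ψ₂ = v 0 - (1 + p 2) * (p 4) ^ 2)
    (hfeedback2 : p 4 * ψ₁ + (1 + p 2) * ψ₂ = v 1) :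
    fderiv ℝ Φ p
      ![p 1 + 2 * p 1 * (p 2 + p 3 * p 4), p 2 + p 3 * p 4, ψ₁, (1 + p 2) * p 4, ψ₂]
      = ![Φ p 1, Φ p 2, v 0, Φ p 4, v 1] := by
  have hΦ' : Φ = fun q => ![q 0 - (q 1) ^ 2, q 1, q 2 + q 3 * q 4, q 3, (1 + q 2) * q 4] :=
    funext hΦ
  subst hΦ'
  set pr : Fin 5 → (Fin 5 → ℝ) →L[ℝ] ℝ := fun i => ContinuousLinearMap.proj i with hpr
  have hq : ∀ i : Fin 5, HasFDerivAt (fun q : Fin 5 → ℝ => q i) (pr i) p :=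
    fun i => (ContinuousLinearMap.proj i : (Fin 5 → ℝ) →L[ℝ] ℝ).hasFDerivAt
  set L : (Fin 5 → ℝ) →L[ℝ] (Fin 5 → ℝ) := ContinuousLinearMap.pi
    ![pr 0 - (2 * p 1) • pr 1, pr 1, pr 2 + p 4 • pr 3 + p 3 • pr 4, pr 3,
      p 4 • pr 2 + (1 + p 2) • pr 4] with hL
  have hD : HasFDerivAt (fun q : Fin 5 → ℝ =>
      ![q 0 - (q 1) ^ 2, q 1, q 2 + q 3 * q 4, q 3, (1 + q 2) * q 4]) L p := by
    rw [hasFDerivAt_pi']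
    intro i
    fin_cases i
    · convert (hq 0).sub ((hq 1).mul (hq 1)) using 1
      · funext q; simp; ring
      · ext q; simp [hL, hpr, ContinuousLinearMap.pi_apply]; ring
    · refine HasFDerivAt.congr_fderiv (hq 1) ?_
      ext q; simp [hL, hpr, ContinuousLinearMap.pi_apply]
    · convert (hq 2).add ((hq 3).mul (hq 4)) using 1
      · funext q; simp
      ext q; simp [hL, hpr, ContinuousLinearMap.pi_apply]; ring
    · refine HasFDerivAt.congr_fderiv (hq 3) ?_
      ext q; simp [hL, hpr, ContinuousLinearMap.pi_apply]
    · have h4 := ((hasFDerivAt_const (1:ℝ) p).add (hq 2)).mul (hq 4)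
      refine HasFDerivAt.congr_fderiv (h4.congr_of_eventuallyEq (Filter.Eventually.of_forall fun q => ?_)) ?_
      · simp
      ext q; simp [hL, hpr, ContinuousLinearMap.pi_apply]; ring
  rw [hD.fderiv]
  funext i
  fin_cases i <;>
    simp [hL, hpr, ContinuousLinearMap.pi_apply] <;> ring_nf <;>
    nlinarith [hfeedback1, hfeedback2]
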